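/- Let λ = λ₀[1 - e_p(αM(N_cap - λ/μ)^{-1/2} + βp_f)] define λ implicitly as a function of p_f (with N_cap fixed and all parameters positive, on the domain where λ ∈ (0, μN_cap)). Suppose (λ, p_f) and (λ', p_f') both satisfy this demand equation together with the first-order condition λ₀e_pβμ p_f = λ₀e_pαM·λ/(2(N_cap - λ/μ)^{3/2}) + λμ. If p_f' > p_f then the demand equation forces λ' < λ while the first-order condition forces λ' > λ; hence p_f' = p_f and the solution is unique. -/
import Mathlib

set_option maxHeartbeats 1000000 in
theorem stmt19 (lam0 e_p alpha M beta mu Ncap : ℝ)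
    (hlam0 : 0 < lam0) (hep : 0 < e_p) (halpha : 0 < alpha) (hM : 0 < M)
    (hbeta : 0 < beta) (hmu : 0 < mu) (hNcap : 0 < Ncap)
    (lam pf lam' pf' : ℝ)
    (hlam : lam ∈ Set.Ioo 0 (mu * Ncap)) (hlam' : lam' ∈ Set.Ioo 0 (mu * Ncap))
    (hd : lam = lam0 * (1 - e_p * (alpha * M * (Ncap - lam / mu) ^ (-(1 : ℝ) / 2) + beta * pf)))
    (hd' : lam' = lam0 * (1 - e_p * (alpha * M * (Ncap - lam' / mu) ^ (-(1 : ℝ) / 2) + beta * pf')))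
    (hf : lam0 * e_p * beta * mu * pf
      = lam0 * e_p * alpha * M * lam / (2 * (Ncap - lam / mu) ^ ((3 : ℝ) / 2)) + lam * mu)
    (hf' : lam0 * e_p * beta * mu * pf'
      = lam0 * e_p * alpha * M * lam' / (2 * (Ncap - lam' / mu) ^ ((3 : ℝ) / 2)) + lam' * mu) :
    (pf < pf' → lam' < lam) ∧ (pf < pf' → lam < lam') ∧ pf = pf' ∧ lam = lam' := by
  have hpos : ∀ x : ℝ, 0 < x → x < mu * Ncap → 0 < Ncap - x / mu := by
    intro x hx hxc
    have : x / mu < Ncap := (div_lt_iff₀ hmu).mpr (by nlinarith)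
    linarith
  -- demand: smaller price gives larger lam
  have hdem : ∀ x px y py : ℝ, 0 < x → x < mu * Ncap → 0 < y → y < mu * Ncap →
      x = lam0 * (1 - e_p * (alpha * M * (Ncap - x / mu) ^ (-(1 : ℝ) / 2) + beta * px)) →
      y = lam0 * (1 - e_p * (alpha * M * (Ncap - y / mu) ^ (-(1 : ℝ) / 2) + beta * py)) →
      px < py → y < x := by
    intro x px y py hx hxc hy hyc hdx hdy hpp
    have hux := hpos x hx hxc
    have huy := hpos y hy hyc
    by_contra hle
    push_neg at hle
    have hdiv : x / mu ≤ y / mu := by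
      exact div_le_div_of_nonneg_right hle hmu.le
    have hsub : Ncap - y / mu ≤ Ncap - x / mu := by linarith
    have hrp : (Ncap - x / mu) ^ (-(1 : ℝ) / 2) ≤ (Ncap - y / mu) ^ (-(1 : ℝ) / 2) :=
      Real.rpow_le_rpow_of_nonpos huy hsub (by norm_num)
    have hlt : alpha * M * (Ncap - x / mu) ^ (-(1 : ℝ) / 2) + beta * px
        < alpha * M * (Ncap - y / mu) ^ (-(1 : ℝ) / 2) + beta * py := by
      have h1 : alpha * M * (Ncap - x / mu) ^ (-(1 : ℝ) / 2)
          ≤ alpha * M * (Ncap - y / mu) ^ (-(1 : ℝ) / 2) :=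
        mul_le_mul_of_nonneg_left hrp (by positivity)
      have h2 : beta * px < beta * py := mul_lt_mul_of_pos_left hpp hbeta
      linarith
    have : y < x := by
      rw [hdx, hdy]
      nlinarith [mul_lt_mul_of_pos_left hlt hep]
    linarith
  -- FOC rhs is strictly increasing in lam
  have hmono : ∀ x y : ℝ, 0 < x → x < y → y < mu * Ncap →
      lam0 * e_p * alpha * M * x / (2 * (Ncap - x / mu) ^ ((3 : ℝ) / 2)) + x * mu
      < lam0 * e_p * alpha * M * y / (2 * (Ncap - y / mu) ^ ((3 : ℝ) / 2)) + y * mu := by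
    intro x y hx hxy hyc
    have hvx : 0 < Ncap - x / mu := hpos x hx (by linarith)
    have hvy : 0 < Ncap - y / mu := hpos y (by linarith) hyc
    have hvyx : Ncap - y / mu < Ncap - x / mu := by
      have : x / mu < y / mu := by exact div_lt_div_of_pos_right hxy hmu
      linarith
    have hrp : (Ncap - y / mu) ^ ((3 : ℝ) / 2) < (Ncap - x / mu) ^ ((3 : ℝ) / 2) :=
      Real.rpow_lt_rpow hvy.le hvyx (by norm_num)
    have hrpy : 0 < (Ncap - y / mu) ^ ((3 : ℝ) / 2) := Real.rpow_pos_of_pos hvy _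
    have h3 : lam0 * e_p * alpha * M * x / (2 * (Ncap - x / mu) ^ ((3 : ℝ) / 2))
        < lam0 * e_p * alpha * M * y / (2 * (Ncap - y / mu) ^ ((3 : ℝ) / 2)) := by
      rw [div_lt_div_iff₀ (by positivity) (by positivity)]
      have hK : 0 < lam0 * e_p * alpha * M := by positivity
      have hy' : 0 < y := hx.trans hxy
      nlinarith [mul_pos (mul_pos hrpy hK) (sub_pos.mpr hxy),
        mul_pos (mul_pos hK hy') (sub_pos.mpr hrp)]
    nlinarith
  -- FOC: smaller price gives smaller lam
  have hfoc : ∀ x px y py : ℝ, 0 < x → x < mu * Ncap → 0 < y → y < mu * Ncap →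
      lam0 * e_p * beta * mu * px
        = lam0 * e_p * alpha * M * x / (2 * (Ncap - x / mu) ^ ((3 : ℝ) / 2)) + x * mu →
      lam0 * e_p * beta * mu * py
        = lam0 * e_p * alpha * M * y / (2 * (Ncap - y / mu) ^ ((3 : ℝ) / 2)) + y * mu →
      px < py → x < y := by
    intro x px y py hx hxc hy hyc hfx hfy hpp
    have hC : lam0 * e_p * beta * mu * px < lam0 * e_p * beta * mu * py := by
      exact mul_lt_mul_of_pos_left hpp (by positivity)
    rcases lt_trichotomy x y with h | h | h
    · exact h
    · rw [h] at hfx; linarith [hfx, hfy]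
    · have := hmono y x hy h hxc; linarith [hfx, hfy]
  have hkey : ¬ pf < pf' := fun hpp =>
    absurd (hfoc lam pf lam' pf' hlam.1 hlam.2 hlam'.1 hlam'.2 hf hf' hpp)
      (not_lt.mpr (hdem lam pf lam' pf' hlam.1 hlam.2 hlam'.1 hlam'.2 hd hd' hpp).le)
  have hkey' : ¬ pf' < pf := fun hpp =>
    absurd (hfoc lam' pf' lam pf hlam'.1 hlam'.2 hlam.1 hlam.2 hf' hf hpp)
      (not_lt.mpr (hdem lam' pf' lam pf hlam'.1 hlam'.2 hlam.1 hlam.2 hd' hd hpp).le)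
  have hpf : pf = pf' := le_antisymm (not_lt.mp hkey') (not_lt.mp hkey)
  have hll : lam = lam' := by
    rcases lt_trichotomy lam lam' with h | h | h
    · have := hmono lam lam' hlam.1 h hlam'.2; rw [hpf] at hf; linarith [hf, hf']
    · exact h
    · have := hmono lam' lam hlam'.1 h hlam.2; rw [hpf] at hf; linarith [hf, hf']
  exact ⟨fun h => absurd h hkey, fun h => absurd h hkey, hpf, hll⟩
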